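/- arXiv:2604.02588 — 3 statements merged into one kernel-verified Lean document; each statement's English description precedes it below -/
import Mathlib

section
/- Let X be a separable Banach lattice. Then the set {((x_n), x) ∈ X^ℕ × X : (x_n) converges uniformly to x} is a Borel subset of X^ℕ × X, where X^ℕ carries the product topology. -/
open MeasureTheory

/-- A sequence `(x n)` in a Banach lattice converges uniformly to `l` if there is a `z`
such that for every `m ≥ 1`, `|x n - l| ≤ z / m` for all but finitely many `n`. -/
def UnifConvergesTo {X : Type*} [NormedAddCommGroup X] [Lattice X] [HasSolidNorm X]
    [IsOrderedAddMonoid X] [NormedSpace ℝ X]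
    (x : ℕ → X) (l : X) : Prop :=
  ∃ z : X, ∀ m : ℕ, 1 ≤ m → ∀ᶠ n in Filter.atTop, |x n - l| ≤ (m : ℝ)⁻¹ • z

/-- Continuity of a finite sup of continuous lattice-valued functions. -/
lemma continuous_finset_sup'_aux {X : Type*} [NormedAddCommGroup X] [Lattice X] [HasSolidNorm X]
    [IsOrderedAddMonoid X]
    {ι Y : Type*} [TopologicalSpace Y] (s : Finset ι) (hs : s.Nonempty) (f : ι → Y → X)
    (hf : ∀ i, Continuous (f i)) : Continuous fun y => s.sup' hs fun i => f i y := by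
  induction hs using Finset.Nonempty.cons_induction with
  | singleton i => simpa using hf i
  | cons i s hi hs ih =>
      have : (fun y => (Finset.cons i s hi).sup' (Finset.cons_nonempty hi) fun j => f j y)
          = fun y => f i y ⊔ s.sup' hs fun j => f j y := by
        funext y; rw [Finset.sup'_cons]
      rw [this]; exact (hf i).sup ih

theorem stmt3 {X : Type*} [NormedAddCommGroup X] [Lattice X] [HasSolidNorm X]
    [IsOrderedAddMonoid X] [NormedSpace ℝ X] [CompleteSpace X]
    [PosSMulStrictMono ℝ X] [PosSMulReflectLT ℝ X] [TopologicalSpace.SeparableSpace X] :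
    MeasurableSet[borel ((ℕ → X) × X)]
      {p : (ℕ → X) × X | UnifConvergesTo p.1 p.2} := by
  letI : MeasurableSpace ((ℕ → X) × X) := borel _
  haveI : BorelSpace ((ℕ → X) × X) := ⟨rfl⟩
  have hne : ∀ N j : ℕ, (Finset.Icc N (N + j)).Nonempty :=
    fun N j => Finset.nonempty_Icc.mpr (Nat.le_add_right N j)
  have key : {p : (ℕ → X) × X | UnifConvergesTo p.1 p.2} =
      ⋃ c : ℕ, ⋂ m : ℕ, ⋃ N : ℕ, ⋂ j : ℕ,
        {p : (ℕ → X) × X |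
          ‖(Finset.Icc N (N + j)).sup' (hne N j) (fun n => |p.1 n - p.2|)‖
            ≤ (c : ℝ) / ((m : ℝ) + 1) ^ 3} := by
    ext ⟨x, l⟩
    simp only [Set.mem_setOf_eq, Set.mem_iUnion, Set.mem_iInter]
    constructor
    · -- forward: a regulator gives the block-sup bounds with c = ⌈‖z‖⌉₊
      rintro ⟨z, hz⟩
      refine ⟨⌈‖z‖⌉₊, fun m => ?_⟩
      have hm3 : 1 ≤ (m + 1) ^ 3 := Nat.one_le_pow _ _ (Nat.succ_pos m)
      obtain ⟨N, hN⟩ := Filter.eventually_atTop.mp (hz ((m + 1) ^ 3) hm3)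
      refine ⟨N, fun j => ?_⟩
      set s := (Finset.Icc N (N + j)).sup' (hne N j) (fun n => |x n - l|) with hs
      have h0 : (0 : X) ≤ s := by
        refine le_trans (abs_nonneg (x N - l)) ?_
        exact Finset.le_sup' (fun n => |x n - l|)
          (Finset.mem_Icc.mpr ⟨le_refl N, Nat.le_add_right N j⟩)
      have h1 : s ≤ ((((m + 1) ^ 3 : ℕ) : ℝ))⁻¹ • z := by
        rw [hs]
        exact Finset.sup'_le (hne N j) (fun n => |x n - l|)
          fun n hn => hN n (Finset.mem_Icc.mp hn).1
      have hsolid : ‖s‖ ≤ ‖((((m + 1) ^ 3 : ℕ) : ℝ))⁻¹ • z‖ := by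
        refine HasSolidNorm.solid ?_
        rw [abs_of_nonneg h0, abs_of_nonneg (h0.trans h1)]
        exact h1
      have hnorm : ‖((((m + 1) ^ 3 : ℕ) : ℝ))⁻¹ • z‖
          = ((((m + 1) ^ 3 : ℕ) : ℝ))⁻¹ * ‖z‖ := by
        rw [norm_smul, Real.norm_eq_abs, abs_of_nonneg (by positivity)]
      refine hsolid.trans ?_
      rw [hnorm]
      have hle : ‖z‖ ≤ (⌈‖z‖⌉₊ : ℝ) := Nat.le_ceil _
      have hpos : (0:ℝ) < (((m + 1) ^ 3 : ℕ) : ℝ) := by positivity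
      rw [div_eq_inv_mul]
      have : ((((m + 1) ^ 3 : ℕ) : ℝ))⁻¹ = (((m : ℝ) + 1) ^ 3)⁻¹ := by push_cast; ring_nf
      rw [this]
      exact mul_le_mul_of_nonneg_left hle (by positivity)
    · -- backward: rebuild a regulator from block sups
      rintro ⟨c, hc⟩
      set t : ℕ → X := fun n => |x n - l| with ht
      choose g hg using hc
      -- B : strictly increasing sequence with B m ≥ g m
      set B : ℕ → ℕ := fun m => Nat.rec (g 0) (fun m ih => max (ih + 1) (g (m + 1))) m with hB
      have hBsucc : ∀ m, B (m + 1) = max (B m + 1) (g (m + 1)) := fun m => rfl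
      have hBmono : StrictMono B := strictMono_nat_of_lt_succ fun m => by
        rw [hBsucc]; exact lt_of_lt_of_le (Nat.lt_succ_self _) (le_max_left _ _)
      have hBg : ∀ m, g m ≤ B m := by
        intro m; cases m with
        | zero => exact le_refl _
        | succ m => rw [hBsucc]; exact le_max_right _ _
      -- general block-sup bound starting from any N ≥ B m
      have hsup : ∀ m N', B m ≤ N' →
          ∀ (h : (Finset.Icc (B m) N').Nonempty),
          ‖(Finset.Icc (B m) N').sup' h t‖ ≤ (c : ℝ) / ((m : ℝ) + 1) ^ 3 := by
        intro m N' hN' h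
        have hgN' : g m ≤ N' := le_trans (hBg m) hN'
        have hsub : Finset.Icc (B m) N' ⊆ Finset.Icc (g m) (g m + (N' - g m)) := by
          intro n hn
          rw [Finset.mem_Icc] at hn ⊢
          have hgB := hBg m
          omega
        have hle : (Finset.Icc (B m) N').sup' h t
            ≤ (Finset.Icc (g m) (g m + (N' - g m))).sup' (hne _ _) t :=
          Finset.sup'_le _ _ fun n hn => Finset.le_sup' t (hsub hn)
        have h0 : (0 : X) ≤ (Finset.Icc (B m) N').sup' h t := by
          obtain ⟨n, hn⟩ := h
          exact le_trans (abs_nonneg (x n - l)) (Finset.le_sup' t hn)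
        have := hg m (N' - g m)
        refine le_trans (HasSolidNorm.solid ?_) this
        rw [abs_of_nonneg h0, abs_of_nonneg (h0.trans hle)]
        exact hle
      -- block sups
      set V : ℕ → X := fun m => (Finset.Icc (B m) (B (m + 1))).sup'
        (Finset.nonempty_Icc.mpr (hBmono (Nat.lt_succ_self m)).le) t with hV
      have hV0 : ∀ m, (0 : X) ≤ V m := fun m =>
        le_trans (abs_nonneg (x (B m) - l)) (Finset.le_sup' t
          (Finset.mem_Icc.mpr ⟨le_refl _, (hBmono (Nat.lt_succ_self m)).le⟩))
      have hVnorm : ∀ m, ‖V m‖ ≤ (c : ℝ) / ((m : ℝ) + 1) ^ 3 :=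
        fun m => hsup m (B (m + 1)) (hBmono (Nat.lt_succ_self m)).le _
      -- the regulator
      have hsummable : Summable (fun m : ℕ => ((m : ℝ) + 1) • V m) := by
        refine Summable.of_norm ?_
        have hcomp : ∀ m : ℕ, ‖((m : ℝ) + 1) • V m‖ ≤ (c : ℝ) * (1 / ((m : ℝ) + 1) ^ 2) := by
          intro m
          rw [norm_smul, Real.norm_eq_abs, abs_of_nonneg (by positivity)]
          have := mul_le_mul_of_nonneg_left (hVnorm m) (by positivity : (0:ℝ) ≤ (m : ℝ) + 1)
          refine this.trans (le_of_eq ?_)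
          field_simp
        refine Summable.of_nonneg_of_le (fun m => norm_nonneg _) hcomp ?_
        refine Summable.mul_left _ ?_
        have h2 : Summable (fun n : ℕ => 1 / (n : ℝ) ^ 2) :=
          Real.summable_one_div_nat_pow.mpr one_lt_two
        have := (summable_nat_add_iff 1).mpr h2
        refine this.congr fun n => ?_
        push_cast
        ring
      set z : X := ∑' m : ℕ, ((m : ℝ) + 1) • V m with hz
      have hterm : ∀ k : ℕ, ((k : ℝ) + 1) • V k ≤ z :=
        fun k => hsummable.le_tsum k fun j _ => smul_nonneg (by positivity) (hV0 j)
      have hz0 : (0 : X) ≤ z := tsum_nonneg fun m => smul_nonneg (by positivity) (hV0 m)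
      have hVle : ∀ k, V k ≤ ((k : ℝ) + 1)⁻¹ • z := by
        intro k
        have := smul_le_smul_of_nonneg_left (hterm k)
          (by positivity : (0:ℝ) ≤ ((k : ℝ) + 1)⁻¹)
        rwa [smul_smul, inv_mul_cancel₀ (by positivity : ((k : ℝ) + 1) ≠ 0), one_smul] at this
      refine ⟨z, fun m hm => ?_⟩
      rw [Filter.eventually_atTop]
      refine ⟨B m, fun n hn => ?_⟩
      -- find the block containing n
      set k := Nat.findGreatest (fun j => B j ≤ n) n with hk
      have hmn : m ≤ n := le_trans (hBmono.le_apply) hn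
      have hk1 : B k ≤ n := Nat.findGreatest_spec (P := fun j => B j ≤ n) hmn hn
      have hk2 : m ≤ k := Nat.le_findGreatest hmn hn
      have hk3 : n ≤ B (k + 1) := by
        by_contra hcon
        push_neg at hcon
        have hkn : k + 1 ≤ n := le_trans (hBmono.le_apply) hcon.le
        exact Nat.findGreatest_is_greatest (Nat.lt_succ_self k) hkn hcon.le
      have htV : t n ≤ V k := Finset.le_sup' t (Finset.mem_Icc.mpr ⟨hk1, hk3⟩)
      refine le_trans htV ((hVle k).trans ?_)
      -- (k+1)⁻¹ • z ≤ m⁻¹ • z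
      have hscal : ((k : ℝ) + 1)⁻¹ ≤ ((m : ℝ))⁻¹ := by
        have hm0 : (0:ℝ) < (m : ℝ) := by exact_mod_cast hm
        refine inv_anti₀ hm0 ?_
        have : (m : ℝ) ≤ (k : ℝ) := by exact_mod_cast hk2
        linarith
      have h := smul_nonneg (sub_nonneg.mpr hscal) hz0
      rw [sub_smul] at h
      exact sub_nonneg.mp h
  rw [key]
  refine MeasurableSet.iUnion fun c => MeasurableSet.iInter fun m =>
    MeasurableSet.iUnion fun N => MeasurableSet.iInter fun j => ?_
  have hcont : Continuous fun p : (ℕ → X) × X =>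
      ‖(Finset.Icc N (N + j)).sup' (hne N j) (fun n => |p.1 n - p.2|)‖ := by
    refine Continuous.norm ?_
    refine continuous_finset_sup'_aux _ _ (fun n (p : (ℕ → X) × X) => |p.1 n - p.2|) fun n => ?_
    have hsub : Continuous fun p : (ℕ → X) × X => p.1 n - p.2 :=
      ((continuous_apply n).comp continuous_fst).sub continuous_snd
    simpa only [abs, Pi.neg_apply] using hsub.sup hsub.neg
  exact (isClosed_Iic.preimage hcont).measurableSet
end

section
/- Let X be a σ-complete separable Banach lattice. Then the sets X_{↓0} = {(x_n) ∈ X^ℕ : x_1 ≥ x_2 ≥ … ≥ 0 and inf_n x_n = 0} and X^{↑∞} = {(x_n) ∈ X^ℕ : 0 ≤ x_1 ≤ x_2 ≤ … and {x_n : n ∈ ℕ} has no upper bound in X} are both Borel subsets of X^ℕ (with the product topology), and the set {((x_n), x) ∈ X^ℕ × X : (x_n) σ-order converges to x} is analytic. -/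
open MeasureTheory

/-- The set of decreasing positive sequences in `X` whose range has `0` as greatest lower
bound. -/
def XDownZero (X : Type*) [NormedAddCommGroup X] [Lattice X] [IsOrderedAddMonoid X] [HasSolidNorm X] : Set (ℕ → X) :=
  {z | Antitone z ∧ (∀ n, 0 ≤ z n) ∧ IsGLB (Set.range z) 0}

/-- The set of increasing positive sequences in `X` whose range has no upper bound in `X`. -/
def XUpInfty (X : Type*) [NormedAddCommGroup X] [Lattice X] [IsOrderedAddMonoid X] [HasSolidNorm X] : Set (ℕ → X) :=
  {x | Monotone x ∧ (∀ n, 0 ≤ x n) ∧ ¬∃ b : X, ∀ n, x n ≤ b}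

/-- A sequence `(x n)` in a Banach lattice σ-order converges to `l` if there exists a decreasing
sequence `z 0 ≥ z 1 ≥ … ≥ 0` whose range has `0` as its greatest lower bound, such that for every
`m`, `|x n - l| ≤ z m` for all but finitely many `n`. -/
def SigmaOrderConvergesTo {X : Type*} [NormedAddCommGroup X] [Lattice X] [IsOrderedAddMonoid X] [HasSolidNorm X] (x : ℕ → X) (l : X) : Prop :=
  ∃ z : ℕ → X, Antitone z ∧ (∀ m, 0 ≤ z m) ∧ IsGLB (Set.range z) 0 ∧
    ∀ m, ∀ᶠ n in Filter.atTop, |x n - l| ≤ z m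

open Filter Topology

section PosFunctional
variable {X : Type*} [NormedAddCommGroup X] [Lattice X] [IsOrderedAddMonoid X] [HasSolidNorm X] [NormedSpace ℝ X] [PosSMulStrictMono ℝ X] [PosSMulReflectLT ℝ X]

lemma smul_sup_zero (c : ℝ) (hc : 0 < c) (x : X) : (c • x) ⊔ 0 = c • (x ⊔ 0) := by
  apply le_antisymm
  · apply sup_le
    · exact smul_le_smul_of_nonneg_left le_sup_left hc.le
    · have h := smul_le_smul_of_nonneg_left (le_sup_right : (0:X) ≤ x ⊔ 0) hc.le
      simpa using h
  · rw [← le_inv_smul_iff_of_pos hc]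
    apply sup_le
    · rw [le_inv_smul_iff_of_pos hc]
      exact le_sup_left
    · exact smul_nonneg (inv_nonneg.2 hc.le) le_sup_right

lemma exists_pos_functional (y : X) (hy : 0 ≤ y) :
    ∃ f : X →ₗ[ℝ] ℝ, (∀ x, f x ≤ ‖x ⊔ 0‖) ∧ f y = ‖y‖ := by
  rcases eq_or_ne y 0 with rfl | hy0
  · exact ⟨0, fun x => norm_nonneg _, by simp⟩
  · have Nhom : ∀ (c : ℝ), 0 < c → ∀ (x : X), ‖(c • x) ⊔ 0‖ = c * ‖x ⊔ 0‖ := by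
      intro c hc x
      rw [smul_sup_zero c hc, norm_smul, Real.norm_of_nonneg hc.le]
    have Nadd : ∀ x x' : X, ‖(x + x') ⊔ 0‖ ≤ ‖x ⊔ 0‖ + ‖x' ⊔ 0‖ := by
      intro x x'
      have h1 : (x + x') ⊔ 0 ≤ (x ⊔ 0) + (x' ⊔ 0) := by
        exact sup_le (add_le_add le_sup_left le_sup_left)
          (add_nonneg le_sup_right le_sup_right)
      calc ‖(x + x') ⊔ 0‖ ≤ ‖(x ⊔ 0) + (x' ⊔ 0)‖ := by
            apply norm_le_norm_of_abs_le_abs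
            rw [abs_of_nonneg le_sup_right,
              abs_of_nonneg (add_nonneg (le_sup_right : (0:X) ≤ _) le_sup_right)]
            exact h1
        _ ≤ _ := norm_add_le _ _
    set F : X →ₗ.[ℝ] ℝ := LinearPMap.mkSpanSingleton y ‖y‖ hy0 with hF
    have hdom : ∀ v : F.domain, F v ≤ ‖(v : X) ⊔ 0‖ := by
      rintro ⟨v, hv⟩
      have hv2 : v ∈ Submodule.span ℝ {y} := hv
      rcases Submodule.mem_span_singleton.1 hv2 with ⟨c, rfl⟩
      have hFv : F ⟨c • y, hv⟩ = c • ‖y‖ := LinearPMap.mkSpanSingleton'_apply y ‖y‖ _ c hv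
      rw [hFv]
      have hcoe : ((⟨c • y, hv⟩ : F.domain) : X) = c • y := rfl
      rw [hcoe, smul_eq_mul]
      rcases le_or_gt c 0 with hc | hc
      · exact le_trans (mul_nonpos_of_nonpos_of_nonneg hc (norm_nonneg _)) (norm_nonneg _)
      · rw [Nhom c hc y, sup_eq_left.2 hy]
    obtain ⟨g, hg1, hg2⟩ := exists_extension_of_le_sublinear F (fun x => ‖x ⊔ 0‖) Nhom Nadd hdom
    refine ⟨g, hg2, ?_⟩
    have hy_mem : y ∈ F.domain := Submodule.mem_span_singleton_self y
    have h1 := hg1 ⟨y, hy_mem⟩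
    have h2 : F ⟨y, hy_mem⟩ = ‖y‖ := LinearPMap.mkSpanSingleton'_apply_self y ‖y‖ _ hy_mem
    rw [show ((⟨y, hy_mem⟩ : F.domain) : X) = y from rfl] at h1
    rw [h1, h2]

end PosFunctional

section Lattice
variable {X : Type*} [NormedAddCommGroup X] [Lattice X] [IsOrderedAddMonoid X] [HasSolidNorm X]

lemma norm_sup_zero_le (x : X) : ‖x ⊔ 0‖ ≤ ‖x‖ := by
  apply norm_le_norm_of_abs_le_abs
  rw [abs_of_nonneg (le_sup_right : (0:X) ≤ _)]
  exact sup_le (le_abs_self x) (abs_nonneg x)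

lemma isLUB_add_monotone {a b : ℕ → X} {α β : X} (ha : Monotone a) (hb : Monotone b)
    (la : IsLUB (Set.range a) α) (lb : IsLUB (Set.range b) β) :
    IsLUB (Set.range fun n => a n + b n) (α + β) := by
  constructor
  · rintro _ ⟨n, rfl⟩
    exact add_le_add (la.1 ⟨n, rfl⟩) (lb.1 ⟨n, rfl⟩)
  · intro c hc
    have key : ∀ n, a n ≤ c - β := by
      intro n
      rw [le_sub_iff_add_le]
      have hβ : β ≤ c - a n := by
        apply lb.2
        rintro _ ⟨m, rfl⟩
        rw [le_sub_iff_add_le]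
        calc b m + a n ≤ b (max n m) + a (max n m) :=
              add_le_add (hb (le_max_right n m)) (ha (le_max_left n m))
          _ = a (max n m) + b (max n m) := add_comm _ _
          _ ≤ c := hc ⟨max n m, rfl⟩
      calc a n + β ≤ a n + (c - a n) := add_le_add_right hβ _
        _ = c := by abel
    rw [← le_sub_iff_add_le]
    exact la.2 (by rintro _ ⟨n, rfl⟩; exact key n)

variable [NormedSpace ℝ X]

lemma pos_functional_nonneg (f : X →ₗ[ℝ] ℝ) (hf : ∀ x, f x ≤ ‖x ⊔ 0‖) {v : X} (hv : 0 ≤ v) :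
    0 ≤ f v := by
  have h := hf (-v)
  rw [map_neg] at h
  rw [show (-v) ⊔ 0 = 0 from sup_eq_right.2 (neg_nonpos.2 hv), norm_zero] at h
  linarith

lemma pos_functional_abs_le (f : X →ₗ[ℝ] ℝ) (hf : ∀ x, f x ≤ ‖x ⊔ 0‖) (x : X) :
    |f x| ≤ ‖x‖ := by
  rw [abs_le]
  constructor
  · have h := (hf (-x)).trans (norm_sup_zero_le (-x))
    rw [map_neg, norm_neg] at h; linarith
  · exact (hf x).trans (norm_sup_zero_le x)

end Lattice

section Rosenthal

lemma rosenthal_aux (μ : ℕ → Set ℕ → ℝ) (C ε : ℝ)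
    (hmono : ∀ n (A B : Set ℕ), A ⊆ B → μ n A ≤ μ n B)
    (hadd : ∀ n (A B : Set ℕ), Disjoint A B → μ n (A ∪ B) = μ n A + μ n B)
    (hbdd : ∀ n A, μ n A ≤ C) :
    ∀ m : ℕ, ∀ E : ℕ → Set ℕ, ∀ k : ℕ → ℕ,
      (Pairwise fun i j => Disjoint (E i) (E j)) → Function.Injective k →
      (∀ j, k j ∈ E j) → (∀ j, C < μ (k j) (E j) + (m : ℝ) * ε) →
      ∃ M : Set ℕ, M.Infinite ∧ ∀ n ∈ M, μ n (M \ {n}) ≤ ε := by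
  intro m
  induction m with
  | zero =>
    intro E k _ _ _ hb
    have h0 := hb 0
    have h1 := hbdd (k 0) (E 0)
    norm_num at h0
    linarith
  | succ m ih =>
    intro E k hdisj hkinj hkmem hb
    classical
    set π : ℕ ≃ ℕ × ℕ := (Denumerable.eqv (ℕ × ℕ)).symm with hπ
    set N : ℕ → Set ℕ := fun r => {j | (π j).1 = r} with hN
    have hNdisj : ∀ {r r' i}, i ∈ N r → i ∈ N r' → r = r' := by
      intro r r' i hi hi'
      rw [hN] at hi hi'
      exact hi.symm.trans hi'
    have hNinf : ∀ r, (N r).Infinite := by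
      intro r
      apply Set.infinite_of_injective_forall_mem
        (f := fun i : ℕ => π.symm (r, i))
      · intro i i' h
        have h2 := π.symm.injective h
        exact (Prod.ext_iff.1 h2).2
      · intro i
        simp [hN]
    by_cases hgood : ∃ r, ∀ j ∈ N r, μ (k j) (⋃ i ∈ N r \ {j}, E i) ≤ ε
    · obtain ⟨r, hr⟩ := hgood
      refine ⟨k '' N r, (hNinf r).image (hkinj.injOn), ?_⟩
      rintro n ⟨j, hjN, rfl⟩
      refine le_trans (hmono _ _ _ ?_) (hr j hjN)
      rintro x ⟨⟨i, hiN, rfl⟩, hne⟩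
      have hij : i ≠ j := fun h => hne (by rw [h]; rfl)
      exact Set.mem_biUnion ⟨hiN, hij⟩ (hkmem i)
    · push_neg at hgood
      choose jr hjrN hjrε using hgood
      set E' : ℕ → Set ℕ := fun r => ⋃ i ∈ N r, E i with hE'
      set k' : ℕ → ℕ := fun r => k (jr r) with hk'
      have hjrinj : Function.Injective jr := by
        intro r r' h
        exact hNdisj (hjrN r) (h ▸ hjrN r')
      apply ih E' k'
      · intro r r' hne
        rw [Set.disjoint_left]
        rintro x ⟨_, ⟨i, rfl⟩, hx⟩ ⟨_, ⟨i', rfl⟩, hx'⟩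
        simp only [Set.mem_iUnion, exists_prop] at hx hx' ⊢
        obtain ⟨hiN, hxE⟩ := hx
        obtain ⟨hi'N, hx'E⟩ := hx'
        have : i ≠ i' := fun h => hne (hNdisj (h ▸ hiN) hi'N)
        exact (Set.disjoint_left.1 (hdisj this)) hxE hx'E
      · intro r r' h
        exact hjrinj (hkinj h)
      · intro r
        exact Set.mem_biUnion (hjrN r) (hkmem (jr r))
      · intro r
        have hsub : E (jr r) ∪ (⋃ i ∈ N r \ {jr r}, E i) ⊆ E' r := by
          apply Set.union_subset
          · exact Set.subset_biUnion_of_mem (hjrN r)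
          · refine Set.iUnion₂_subset fun i hi => Set.subset_biUnion_of_mem hi.1
        have hdisj2 : Disjoint (E (jr r)) (⋃ i ∈ N r \ {jr r}, E i) := by
          rw [Set.disjoint_left]
          rintro x hx hx'
          simp only [Set.mem_iUnion, exists_prop] at hx'
          obtain ⟨i, ⟨hiN, hine⟩, hxE⟩ := hx'
          exact (Set.disjoint_left.1 (hdisj (Ne.symm hine))) hx hxE
        have h1 : μ (k' r) (E (jr r)) + μ (k' r) (⋃ i ∈ N r \ {jr r}, E i)
            ≤ μ (k' r) (E' r) := by
          rw [← hadd _ _ _ hdisj2]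
          exact hmono _ _ _ hsub
        have h2 := hjrε r
        have h3 := hb (jr r)
        push_cast at h3 ⊢
        rw [hk']
        linarith

lemma rosenthal (μ : ℕ → Set ℕ → ℝ) (C ε : ℝ) (hε : 0 < ε)
    (hmono : ∀ n (A B : Set ℕ), A ⊆ B → μ n A ≤ μ n B)
    (hadd : ∀ n (A B : Set ℕ), Disjoint A B → μ n (A ∪ B) = μ n A + μ n B)
    (hbdd : ∀ n A, μ n A ≤ C) (hnonneg : ∀ n A, 0 ≤ μ n A) :
    ∃ M : Set ℕ, M.Infinite ∧ ∀ n ∈ M, μ n (M \ {n}) ≤ ε := by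
  obtain ⟨m, hm⟩ := exists_nat_gt (C / ε)
  apply rosenthal_aux μ C ε hmono hadd hbdd m (fun j => {j}) id
  · intro i j hne
    simpa using hne
  · exact fun a b h => h
  · intro j; rfl
  · intro j
    have hCm : C < (m : ℝ) * ε := by
      rw [div_lt_iff₀ hε] at hm; linarith
    simp only [id_eq]
    linarith [hnonneg j {j}]

end Rosenthal
section LemmaA
variable {X : Type*} [NormedAddCommGroup X] [Lattice X] [IsOrderedAddMonoid X] [HasSolidNorm X] [NormedSpace ℝ X] [PosSMulStrictMono ℝ X] [PosSMulReflectLT ℝ X]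
  [CompleteSpace X] [TopologicalSpace.SeparableSpace X]

lemma tendsto_zero_of_isGLB
    (hcomplete : ∀ x : ℕ → X, (∃ b : X, ∀ n, x n ≤ b) → ∃ s : X, IsLUB (Set.range x) s)
    {z : ℕ → X} (hanti : Antitone z) (hpos : ∀ n, 0 ≤ z n) (hglb : IsGLB (Set.range z) 0) :
    Filter.Tendsto z Filter.atTop (nhds 0) := by
  classical
  by_contra hnot
  have hnc : ¬ CauchySeq z := by
    intro hc
    obtain ⟨l, hl⟩ := cauchySeq_tendsto_of_complete hc
    have hglb' : IsGLB (Set.range z) l := isGLB_of_tendsto_atTop hanti hl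
    rw [hglb'.unique hglb] at hl
    exact hnot hl
  rw [Metric.cauchySeq_iff] at hnc
  push_neg at hnc
  obtain ⟨ε, hε, hpair⟩ := hnc
  choose p hp q hq hd using hpair
  set lo : ℕ → ℕ := fun N => min (p N) (q N) with hlodef
  set hi : ℕ → ℕ := fun N => max (p N) (q N) with hhidef
  have hlo : ∀ N, N ≤ lo N := fun N => le_min (hp N) (hq N)
  have hlohi : ∀ N, lo N ≤ hi N := fun N => min_le_max
  have hdist : ∀ N, ε ≤ dist (z (lo N)) (z (hi N)) := by
    intro N
    rcases le_total (p N) (q N) with h | h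
    · rw [hlodef, hhidef]; simp only [min_eq_left h, max_eq_right h]; exact hd N
    · rw [hlodef, hhidef]; simp only [min_eq_right h, max_eq_left h, dist_comm]; exact hd N
  set r : ℕ → ℕ := fun k => Nat.rec 0 (fun _ prev => hi prev + 1) k with hr
  set a : ℕ → ℕ := fun k => lo (r k) with ha
  set b : ℕ → ℕ := fun k => hi (r k) with hb
  have hab : ∀ k, a k ≤ b k := fun k => hlohi (r k)
  have hba : ∀ k, b k < a (k + 1) := by
    intro k
    have h1 : r (k + 1) = hi (r k) + 1 := rfl
    have h2 : r (k+1) ≤ lo (r (k+1)) := hlo _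
    have : b k < r (k+1) := by rw [h1, hb]; exact Nat.lt_succ_self _
    exact lt_of_lt_of_le this h2
  set y : ℕ → X := fun k => z (a k) - z (b k) with hy
  have hyk : ∀ k, y k = z (a k) - z (b k) := fun k => rfl
  have hynn : ∀ k, 0 ≤ y k := fun k => sub_nonneg.2 (hanti (hab k))
  have hynorm : ∀ k, ε ≤ ‖y k‖ := by
    intro k; rw [hyk k, ← dist_eq_norm]; exact hdist _
  set u : X := z (a 0) with hu
  have hunn : 0 ≤ u := hpos _
  have hpartial : ∀ K, (∑ k ∈ Finset.range K, y k) + z (a K) ≤ u := by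
    intro K
    induction K with
    | zero => simp [hu]
    | succ K ihK =>
      rw [Finset.sum_range_succ]
      have h1 : z (a (K+1)) ≤ z (b K) := hanti (le_of_lt (hba K))
      calc (∑ k ∈ Finset.range K, y k) + y K + z (a (K+1))
          ≤ (∑ k ∈ Finset.range K, y k) + y K + z (b K) := add_le_add_right h1 _
        _ = (∑ k ∈ Finset.range K, y k) + z (a K) := by rw [hyk K]; abel
        _ ≤ u := ihK
  have hsum : ∀ K, (∑ k ∈ Finset.range K, y k) ≤ u := fun K =>
    le_trans (le_add_of_nonneg_right (hpos (a K))) (hpartial K)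
  set pf : Set ℕ → ℕ → X := fun A K => ∑ k ∈ Finset.range K, A.indicator y k with hpf
  have hind_nn : ∀ (A : Set ℕ) k, 0 ≤ A.indicator y k :=
    fun A k => Set.indicator_nonneg (fun i _ => hynn i) k
  have hind_le : ∀ (A : Set ℕ) k, A.indicator y k ≤ y k :=
    fun A k => Set.indicator_le_self' (fun i _ => hynn i) k
  have hpfmono : ∀ A, Monotone (pf A) := by
    intro A K K' hKK'
    apply Finset.sum_le_sum_of_subset_of_nonneg (Finset.range_subset_range.2 hKK')
    exact fun i _ _ => hind_nn A i
  have hpfle : ∀ A K, pf A K ≤ u := by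
    intro A K
    refine le_trans (Finset.sum_le_sum (fun i _ => hind_le A i)) (hsum K)
  choose s hs using fun A : Set ℕ => hcomplete (pf A) ⟨u, fun K => hpfle A K⟩
  have hs0 : ∀ A, 0 ≤ s A := by
    intro A
    have h0 : pf A 0 = 0 := by simp [hpf]
    have h := (hs A).1 ⟨0, rfl⟩
    rwa [h0] at h
  have hsu : ∀ A, s A ≤ u := fun A => (hs A).2 (by rintro _ ⟨K, rfl⟩; exact hpfle A K)
  have hsmono : ∀ A B : Set ℕ, A ⊆ B → s A ≤ s B := by
    intro A B hAB
    apply (hs A).2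
    rintro _ ⟨K, rfl⟩
    refine le_trans ?_ ((hs B).1 ⟨K, rfl⟩)
    apply Finset.sum_le_sum
    intro i _
    exact Set.indicator_le_indicator_of_subset hAB (fun k => hynn k) i
  have hsadd : ∀ A B : Set ℕ, Disjoint A B → s (A ∪ B) = s A + s B := by
    intro A B hAB
    have hpfadd : ∀ K, pf (A ∪ B) K = pf A K + pf B K := by
      intro K
      have hindU : (A ∪ B).indicator y = fun k => A.indicator y k + B.indicator y k :=
        Set.indicator_union_of_disjoint hAB y
      simp only [hpf, hindU, Finset.sum_add_distrib]
    have hlub2 : IsLUB (Set.range fun K => pf A K + pf B K) (s A + s B) :=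
      isLUB_add_monotone (hpfmono A) (hpfmono B) (hs A) (hs B)
    have hfeq : pf (A ∪ B) = fun K => pf A K + pf B K := funext hpfadd
    have h := hs (A ∪ B)
    rw [hfeq] at h
    exact h.unique hlub2
  have hssing : ∀ n, s {n} = y n := by
    intro n
    have hpfsing : ∀ K, pf {n} K = if n ∈ Finset.range K then y n else 0 := by
      intro K
      have h1 : ∀ k, ({n} : Set ℕ).indicator y k = if k = n then y k else 0 := by
        intro k
        simp [Set.indicator_apply]
      calc pf {n} K = ∑ k ∈ Finset.range K, if k = n then y k else 0 :=
            Finset.sum_congr rfl (fun k _ => h1 k)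
        _ = if n ∈ Finset.range K then y n else 0 := Finset.sum_ite_eq' _ _ _
    have hub : ∀ K, pf {n} K ≤ y n := by
      intro K
      rw [hpfsing K]
      split_ifs
      · exact le_refl _
      · exact hynn n
    have hmem : pf {n} (n+1) = y n := by
      rw [hpfsing (n+1)]
      simp
    have hl : IsLUB (Set.range (pf {n})) (y n) :=
      ⟨by rintro _ ⟨K, rfl⟩; exact hub K, fun c hc => hmem ▸ hc ⟨n+1, rfl⟩⟩
    exact (hs {n}).unique hl
  choose f hf1 hf2 using fun k => exists_pos_functional (y k) (hynn k)
  set μ : ℕ → Set ℕ → ℝ := fun n A => f n (s A) with hμ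
  have hμmono : ∀ n (A B : Set ℕ), A ⊆ B → μ n A ≤ μ n B := by
    intro n A B hAB
    have h := pos_functional_nonneg (f n) (hf1 n) (sub_nonneg.2 (hsmono A B hAB))
    rw [map_sub] at h
    simp only [hμ]
    linarith
  have hμadd : ∀ n (A B : Set ℕ), Disjoint A B → μ n (A ∪ B) = μ n A + μ n B := by
    intro n A B h
    simp only [hμ, hsadd A B h, map_add]
  have hμbdd : ∀ n A, μ n A ≤ ‖u‖ := by
    intro n A
    refine le_trans (hf1 n (s A)) ?_
    rw [sup_eq_left.2 (hs0 A)]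
    apply norm_le_norm_of_abs_le_abs
    rw [abs_of_nonneg (hs0 A), abs_of_nonneg hunn]
    exact hsu A
  have hμnn : ∀ n (A : Set ℕ), 0 ≤ μ n A :=
    fun n A => pos_functional_nonneg (f n) (hf1 n) (hs0 A)
  obtain ⟨M, hMinf, hM⟩ := rosenthal μ ‖u‖ (ε/2) (by linarith) hμmono hμadd hμbdd hμnn
  set φ := Set.Infinite.natEmbedding M hMinf with hφ
  set g : Set ℕ → X := fun t => s ((fun i => (φ i : ℕ)) '' t) with hg
  have hsep : ∀ t t' : Set ℕ, ∀ i, i ∈ t → i ∉ t' → ε/2 ≤ dist (g t) (g t') := by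
    intro t t' i hit hit'
    set n : ℕ := (φ i : ℕ) with hn
    have hnM : n ∈ M := (φ i).2
    have h1 : ε ≤ μ n ((fun i => (φ i : ℕ)) '' t) := by
      have hsub : ({n} : Set ℕ) ⊆ (fun i => (φ i : ℕ)) '' t := by
        intro x hx
        rw [Set.mem_singleton_iff] at hx
        exact ⟨i, hit, hx ▸ rfl⟩
      refine le_trans ?_ (hμmono n _ _ hsub)
      have : μ n {n} = ‖y n‖ := by
        simp only [hμ, hssing n]
        exact hf2 n
      rw [this]
      exact hynorm n
    have h2 : μ n ((fun i => (φ i : ℕ)) '' t') ≤ ε/2 := by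
      have hsub : (fun i => (φ i : ℕ)) '' t' ⊆ M \ {n} := by
        rintro _ ⟨j, hjt', rfl⟩
        refine ⟨(φ j).2, ?_⟩
        rw [Set.mem_singleton_iff, hn]
        intro hc
        have : φ j = φ i := Subtype.coe_injective hc
        exact hit' (φ.injective this ▸ hjt')
      exact le_trans (hμmono n _ _ hsub) (hM n hnM)
    have h3 : ε/2 ≤ f n (s ((fun i => (φ i : ℕ)) '' t) - s ((fun i => (φ i : ℕ)) '' t')) := by
      rw [map_sub]
      simp only [hμ] at h1 h2
      linarith
    calc ε/2 ≤ |f n (s ((fun i => (φ i : ℕ)) '' t) - s ((fun i => (φ i : ℕ)) '' t'))| :=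
          le_trans h3 (le_abs_self _)
      _ ≤ ‖s ((fun i => (φ i : ℕ)) '' t) - s ((fun i => (φ i : ℕ)) '' t')‖ :=
          pos_functional_abs_le (f n) (hf1 n) _
      _ = dist (g t) (g t') := (dist_eq_norm _ _).symm
  obtain ⟨S, hScount, hSdense⟩ := TopologicalSpace.exists_countable_dense X
  have hchoice : ∀ t : Set ℕ, ∃ dd, dd ∈ S ∧ dist (g t) dd < ε/8 := by
    intro t
    obtain ⟨dd, hddS, hdd⟩ := hSdense.exists_dist_lt (g t) (show (0:ℝ) < ε/8 by linarith)
    exact ⟨dd, hddS, hdd⟩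
  choose d hdS hdd using hchoice
  have hdinj : Function.Injective d := by
    intro t t' h
    by_contra hne
    have hex : ∃ i, (i ∈ t ∧ i ∉ t') ∨ (i ∈ t' ∧ i ∉ t) := by
      by_contra hno
      push_neg at hno
      apply hne
      ext i
      exact ⟨(hno i).1, (hno i).2⟩
    obtain ⟨i, hi⟩ := hex
    have hd2 : ε/2 ≤ dist (g t) (g t') := by
      rcases hi with ⟨h1, h2⟩ | ⟨h1, h2⟩
      · exact hsep t t' i h1 h2
      · rw [dist_comm]; exact hsep t' t i h1 h2
    have htri : dist (g t) (g t') ≤ dist (g t) (d t) + dist (d t') (g t') := by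
      calc dist (g t) (g t') ≤ dist (g t) (d t) + dist (d t) (g t') := dist_triangle _ _ _
        _ = dist (g t) (d t) + dist (d t') (g t') := by rw [h]
    have h4 := hdd t
    have h5 := hdd t'
    rw [dist_comm] at h5
    linarith
  haveI := hScount.to_subtype
  obtain ⟨enc, henc⟩ := exists_injective_nat ↥S
  have hinj2 : Function.Injective (fun t : Set ℕ => enc ⟨d t, hdS t⟩) := by
    intro t t' h
    have := henc h
    exact hdinj (congrArg Subtype.val this)
  exact Function.cantor_injective _ hinj2

end LemmaA
open Filter Topology

section MeasHelpers
variable {α : Type*} [TopologicalSpace α] [MeasurableSpace α] [OpensMeasurableSpace α]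
variable {X : Type*} [NormedAddCommGroup X] [Lattice X] [IsOrderedAddMonoid X] [HasSolidNorm X]

lemma continuous_abs_comp {g : α → X} (hg : Continuous g) :
    Continuous fun a => |g a| := by
  have h : (fun a => |g a|) = fun a => g a ⊔ -g a := rfl
  rw [h]
  exact hg.sup hg.neg

lemma measurableSet_tendsto_zero (g : ℕ → α → X) (hg : ∀ n, Continuous (g n)) :
    MeasurableSet {a | Filter.Tendsto (fun n => g n a) Filter.atTop (nhds (0:X))} := by
  have heq : {a | Filter.Tendsto (fun n => g n a) Filter.atTop (nhds (0:X))} =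
      ⋂ (k : ℕ), ⋃ (N : ℕ), ⋂ (n : ℕ), ⋂ (_ : N ≤ n), {a | ‖g n a‖ ≤ 1/((k:ℝ)+1)} := by
    ext a
    simp only [Set.mem_iInter, Set.mem_iUnion, Set.mem_setOf_eq]
    constructor
    · intro h k
      have h2 := (NormedAddCommGroup.tendsto_nhds_zero.1 h) (1/((k:ℝ)+1)) (by positivity)
      rw [eventually_atTop] at h2
      obtain ⟨N, hN⟩ := h2
      exact ⟨N, fun n hn => (hN n hn).le⟩
    · intro h
      rw [NormedAddCommGroup.tendsto_nhds_zero]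
      intro ε hε
      obtain ⟨k, hk⟩ := exists_nat_one_div_lt hε
      obtain ⟨N, hN⟩ := h k
      rw [eventually_atTop]
      exact ⟨N, fun n hn => lt_of_le_of_lt (hN n hn) hk⟩
  rw [heq]
  refine MeasurableSet.iInter fun k => MeasurableSet.iUnion fun N =>
    MeasurableSet.iInter fun n => MeasurableSet.iInter fun _ => ?_
  exact (isClosed_le (hg n).norm continuous_const).measurableSet

lemma measurableSet_cauchySeq (g : ℕ → α → X) (hg : ∀ n, Continuous (g n)) :
    MeasurableSet {a | CauchySeq (fun n => g n a)} := by
  have heq : {a | CauchySeq (fun n => g n a)} =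
      ⋂ (k : ℕ), ⋃ (N : ℕ), ⋂ (m : ℕ), ⋂ (_ : N ≤ m), ⋂ (n : ℕ), ⋂ (_ : N ≤ n),
        {a | dist (g m a) (g n a) ≤ 1/((k:ℝ)+1)} := by
    ext a
    simp only [Set.mem_iInter, Set.mem_iUnion, Set.mem_setOf_eq]
    constructor
    · intro h k
      obtain ⟨N, hN⟩ := (Metric.cauchySeq_iff.1 h) (1/((k:ℝ)+1)) (by positivity)
      exact ⟨N, fun m hm n hn => (hN m hm n hn).le⟩
    · intro h
      rw [Metric.cauchySeq_iff]
      intro ε hε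
      obtain ⟨k, hk⟩ := exists_nat_one_div_lt hε
      obtain ⟨N, hN⟩ := h k
      exact ⟨N, fun m hm n hn => lt_of_le_of_lt (hN m hm n hn) hk⟩
  rw [heq]
  refine MeasurableSet.iInter fun k => MeasurableSet.iUnion fun N =>
    MeasurableSet.iInter fun m => MeasurableSet.iInter fun _ =>
    MeasurableSet.iInter fun n => MeasurableSet.iInter fun _ => ?_
  exact (isClosed_le ((hg m).dist (hg n)) continuous_const).measurableSet

variable [MeasurableSpace (ℕ → X)] [OpensMeasurableSpace (ℕ → X)]

lemma measurableSet_antitone : MeasurableSet {z : ℕ → X | Antitone z} := by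
  have heq : {z : ℕ → X | Antitone z} = ⋂ n, {z : ℕ → X | z (n+1) ≤ z n} := by
    ext z
    simp only [Set.mem_iInter, Set.mem_setOf_eq]
    exact ⟨fun h n => h (Nat.le_succ n), antitone_nat_of_succ_le⟩
  rw [heq]
  exact MeasurableSet.iInter fun n =>
    (isClosed_le (continuous_apply (n+1)) (continuous_apply n)).measurableSet

lemma measurableSet_monotone : MeasurableSet {z : ℕ → X | Monotone z} := by
  have heq : {z : ℕ → X | Monotone z} = ⋂ n, {z : ℕ → X | z n ≤ z (n+1)} := by
    ext z
    simp only [Set.mem_iInter, Set.mem_setOf_eq]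
    exact ⟨fun h n => h (Nat.le_succ n), monotone_nat_of_le_succ⟩
  rw [heq]
  exact MeasurableSet.iInter fun n =>
    (isClosed_le (continuous_apply n) (continuous_apply (n+1))).measurableSet

lemma measurableSet_nonneg : MeasurableSet {z : ℕ → X | ∀ n, 0 ≤ z n} := by
  have heq : {z : ℕ → X | ∀ n, 0 ≤ z n} = ⋂ n, {z : ℕ → X | 0 ≤ z n} := by
    ext z; simp [Set.mem_iInter]
  rw [heq]
  exact MeasurableSet.iInter fun n =>
    (isClosed_le continuous_const (continuous_apply n)).measurableSet

end MeasHelpers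
section Char
variable {X : Type*} [NormedAddCommGroup X] [Lattice X] [IsOrderedAddMonoid X] [HasSolidNorm X] [NormedSpace ℝ X] [PosSMulStrictMono ℝ X] [PosSMulReflectLT ℝ X]
  [CompleteSpace X] [TopologicalSpace.SeparableSpace X]

lemma XDownZero_eq
    (hcomplete : ∀ x : ℕ → X, (∃ b : X, ∀ n, x n ≤ b) → ∃ s : X, IsLUB (Set.range x) s) :
    XDownZero X = {z : ℕ → X | Antitone z ∧ (∀ n, 0 ≤ z n) ∧
      Filter.Tendsto z Filter.atTop (nhds 0)} := by
  ext z
  simp only [XDownZero, Set.mem_setOf_eq]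
  constructor
  · rintro ⟨h1, h2, h3⟩
    exact ⟨h1, h2, tendsto_zero_of_isGLB hcomplete h1 h2 h3⟩
  · rintro ⟨h1, h2, h3⟩
    exact ⟨h1, h2, isGLB_of_tendsto_atTop h1 h3⟩

lemma bounded_iff_cauchy
    (hcomplete : ∀ x : ℕ → X, (∃ b : X, ∀ n, x n ≤ b) → ∃ s : X, IsLUB (Set.range x) s)
    {x : ℕ → X} (h1 : Monotone x) :
    (∃ b : X, ∀ n, x n ≤ b) ↔ CauchySeq x := by
  constructor
  · intro hb
    obtain ⟨l, hl⟩ := hcomplete x hb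
    have hanti : Antitone (fun n => l - x n) := fun m n h => sub_le_sub_left (h1 h) l
    have hnn : ∀ n, 0 ≤ l - x n := fun n => sub_nonneg.2 (hl.1 ⟨n, rfl⟩)
    have hglb : IsGLB (Set.range fun n => l - x n) 0 := by
      constructor
      · rintro _ ⟨n, rfl⟩
        exact hnn n
      · intro c hc
        have h5 : ∀ n, x n ≤ l - c := fun n => le_sub_comm.1 (hc ⟨n, rfl⟩)
        have h6 : l ≤ l - c := hl.2 (by rintro _ ⟨n, rfl⟩; exact h5 n)
        exact (le_sub_self_iff l).1 h6
    have ht := tendsto_zero_of_isGLB hcomplete hanti hnn hglb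
    have h7 := ht.const_sub l
    simp only [sub_sub_cancel, sub_zero] at h7
    exact h7.cauchySeq
  · intro hc
    obtain ⟨l, hl⟩ := cauchySeq_tendsto_of_complete hc
    exact ⟨l, fun n => (isLUB_of_tendsto_atTop h1 hl).1 ⟨n, rfl⟩⟩

lemma XUpInfty_eq
    (hcomplete : ∀ x : ℕ → X, (∃ b : X, ∀ n, x n ≤ b) → ∃ s : X, IsLUB (Set.range x) s) :
    XUpInfty X = {x : ℕ → X | Monotone x ∧ (∀ n, 0 ≤ x n) ∧ ¬ CauchySeq x} := by
  ext x
  simp only [XUpInfty, Set.mem_setOf_eq]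
  constructor
  · rintro ⟨h1, h2, h3⟩
    exact ⟨h1, h2, fun hc => h3 ((bounded_iff_cauchy hcomplete h1).2 hc)⟩
  · rintro ⟨h1, h2, h3⟩
    exact ⟨h1, h2, fun hb => h3 ((bounded_iff_cauchy hcomplete h1).1 hb)⟩

end Char

theorem stmt8 {X : Type*} [NormedAddCommGroup X] [Lattice X] [IsOrderedAddMonoid X] [HasSolidNorm X] [NormedSpace ℝ X] [CompleteSpace X]
    [PosSMulStrictMono ℝ X] [PosSMulReflectLT ℝ X] [TopologicalSpace.SeparableSpace X]
    (hcomplete : ∀ x : ℕ → X, (∃ b : X, ∀ n, x n ≤ b) → ∃ s : X, IsLUB (Set.range x) s) :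
    MeasurableSet[borel (ℕ → X)] (XDownZero X) ∧
    MeasurableSet[borel (ℕ → X)] (XUpInfty X) ∧
    MeasureTheory.AnalyticSet {p : (ℕ → X) × X | SigmaOrderConvergesTo p.1 p.2} := by
  refine ⟨?_, ?_, ?_⟩
  · letI : MeasurableSpace (ℕ → X) := borel _
    haveI : BorelSpace (ℕ → X) := ⟨rfl⟩
    rw [XDownZero_eq hcomplete]
    have h : {z : ℕ → X | Antitone z ∧ (∀ n, 0 ≤ z n) ∧
        Filter.Tendsto z Filter.atTop (nhds 0)} =
        {z : ℕ → X | Antitone z} ∩ ({z : ℕ → X | ∀ n, 0 ≤ z n} ∩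
          {z : ℕ → X | Filter.Tendsto z Filter.atTop (nhds 0)}) := rfl
    rw [h]
    exact measurableSet_antitone.inter (measurableSet_nonneg.inter
      (measurableSet_tendsto_zero (fun n (z : ℕ → X) => z n) (fun n => continuous_apply n)))
  · letI : MeasurableSpace (ℕ → X) := borel _
    haveI : BorelSpace (ℕ → X) := ⟨rfl⟩
    rw [XUpInfty_eq hcomplete]
    have h : {x : ℕ → X | Monotone x ∧ (∀ n, 0 ≤ x n) ∧ ¬ CauchySeq x} =
        {x : ℕ → X | Monotone x} ∩ ({x : ℕ → X | ∀ n, 0 ≤ x n} ∩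
          {x : ℕ → X | CauchySeq x}ᶜ) := rfl
    rw [h]
    exact measurableSet_monotone.inter (measurableSet_nonneg.inter
      (measurableSet_cauchySeq (fun n (x : ℕ → X) => x n) (fun n => continuous_apply n)).compl)
  · letI : MeasurableSpace X := borel X
    haveI : BorelSpace X := ⟨rfl⟩
    set B : Set (((ℕ → X) × X) × (ℕ → X)) :=
      {q | Antitone q.2 ∧ (∀ m, 0 ≤ q.2 m) ∧ Filter.Tendsto q.2 Filter.atTop (nhds 0) ∧
        ∀ m, ∀ᶠ n in Filter.atTop, |q.1.1 n - q.1.2| ≤ q.2 m} with hB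
    have himg : {p : (ℕ → X) × X | SigmaOrderConvergesTo p.1 p.2} = Prod.fst '' B := by
      ext p
      simp only [Set.mem_setOf_eq, Set.mem_image, SigmaOrderConvergesTo, hB]
      constructor
      · rintro ⟨zz, h1, h2, h3, h4⟩
        exact ⟨(p, zz), ⟨h1, h2, tendsto_zero_of_isGLB hcomplete h1 h2 h3, h4⟩, rfl⟩
      · rintro ⟨⟨p', zz⟩, ⟨h1, h2, h3, h4⟩, rfl⟩
        exact ⟨zz, h1, h2, isGLB_of_tendsto_atTop h1 h3, h4⟩
    rw [himg]
    have hmeas : MeasurableSet B := by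
      rw [hB]
      have h1 : MeasurableSet {q : ((ℕ → X) × X) × (ℕ → X) | Antitone q.2} :=
        measurable_snd measurableSet_antitone
      have h2 : MeasurableSet {q : ((ℕ → X) × X) × (ℕ → X) | ∀ m, 0 ≤ q.2 m} :=
        measurable_snd measurableSet_nonneg
      have h3 : MeasurableSet {q : ((ℕ → X) × X) × (ℕ → X) |
          Filter.Tendsto q.2 Filter.atTop (nhds (0:X))} :=
        measurableSet_tendsto_zero (fun n (q : ((ℕ → X) × X) × (ℕ → X)) => q.2 n)
          (fun n => (continuous_apply n).comp continuous_snd)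
      have h4 : MeasurableSet {q : ((ℕ → X) × X) × (ℕ → X) |
          ∀ m, ∀ᶠ n in Filter.atTop, |q.1.1 n - q.1.2| ≤ q.2 m} := by
        have heq : {q : ((ℕ → X) × X) × (ℕ → X) |
            ∀ m, ∀ᶠ n in Filter.atTop, |q.1.1 n - q.1.2| ≤ q.2 m} =
            ⋂ (m : ℕ), ⋃ (N : ℕ), ⋂ (n : ℕ), ⋂ (_ : N ≤ n),
              {q : ((ℕ → X) × X) × (ℕ → X) | |q.1.1 n - q.1.2| ≤ q.2 m} := by
          ext q
          simp only [Set.mem_iInter, Set.mem_iUnion, Set.mem_setOf_eq,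
            Filter.eventually_atTop]
        rw [heq]
        refine MeasurableSet.iInter fun m => MeasurableSet.iUnion fun N =>
          MeasurableSet.iInter fun n => MeasurableSet.iInter fun _ => ?_
        have hc1 : Continuous fun q : ((ℕ → X) × X) × (ℕ → X) => |q.1.1 n - q.1.2| :=
          continuous_abs_comp (((continuous_apply n).comp
            (continuous_fst.comp continuous_fst)).sub (continuous_snd.comp continuous_fst))
        have hc2 : Continuous fun q : ((ℕ → X) × X) × (ℕ → X) => q.2 m :=
          (continuous_apply m).comp continuous_snd
        exact (isClosed_le hc1 hc2).measurableSet
      have hsplit : {q : ((ℕ → X) × X) × (ℕ → X) | Antitone q.2 ∧ (∀ m, 0 ≤ q.2 m) ∧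
          Filter.Tendsto q.2 Filter.atTop (nhds 0) ∧
          ∀ m, ∀ᶠ n in Filter.atTop, |q.1.1 n - q.1.2| ≤ q.2 m} =
          {q : ((ℕ → X) × X) × (ℕ → X) | Antitone q.2} ∩
          ({q : ((ℕ → X) × X) × (ℕ → X) | ∀ m, 0 ≤ q.2 m} ∩
          ({q : ((ℕ → X) × X) × (ℕ → X) | Filter.Tendsto q.2 Filter.atTop (nhds 0)} ∩
           {q : ((ℕ → X) × X) × (ℕ → X) |
             ∀ m, ∀ᶠ n in Filter.atTop, |q.1.1 n - q.1.2| ≤ q.2 m})) := rfl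
      rw [hsplit]
      exact h1.inter (h2.inter (h3.inter h4))
    exact (hmeas.analyticSet).image_of_continuous continuous_fst
end

section
/- Let X be a separable Banach lattice and suppose there is a countable ordinal α such that for every (z_n) ∈ X_{↓0} = {(z_n) ∈ X^ℕ : z_1 ≥ z_2 ≥ … ≥ 0 and inf_n z_n = 0}, the rank ρ(Ψ((z_n))) of the well-founded tree Ψ((z_n)) is at most α. Then X_{↓0} is a Borel subset of X^ℕ (with the product topology). -/
open MeasureTheory

/-- The tree `Ψ((z n))`: finite strings `(y 0, …, y (k-1))` of elements of `X` (coded as lists,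
with `s.get i` corresponding to the paper's `y_{i+1}`) such that every entry is strictly
positive, `‖(y i - z n)⁺‖ ≤ ‖y i‖ / 3 ^ (i + 1)` for all entries and all `n`, and
`‖y (i+1) - y i‖ ≤ ‖y i‖ / 3 ^ (i + 1)` for consecutive entries. -/
def PsiTree {X : Type*} [NormedAddCommGroup X] [Lattice X] [IsOrderedAddMonoid X] [HasSolidNorm X] (z : ℕ → X) : Set (List X) :=
  {s | (∀ (i : ℕ) (h : i < s.length), 0 < s.get ⟨i, h⟩) ∧
       (∀ (i : ℕ) (h : i < s.length) (n : ℕ),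
         ‖(s.get ⟨i, h⟩ - z n)⁺‖ ≤ ‖s.get ⟨i, h⟩‖ / 3 ^ (i + 1)) ∧
       (∀ (i : ℕ) (h : i + 1 < s.length),
         ‖s.get ⟨i + 1, h⟩ - s.get ⟨i, Nat.lt_of_succ_lt h⟩‖ ≤
           ‖s.get ⟨i, Nat.lt_of_succ_lt h⟩‖ / 3 ^ (i + 1))}

/-- `PsiRel z s t` holds when `s` and `t` both belong to the tree `Ψ((z n))` and `s` is a proper
extension of `t`.  Well-foundedness of this relation expresses that the tree `Ψ((z n))` has no
infinite branch, and the rank of the empty string in this relation is the rank `ρ_{Ψ}( ∅ )`. -/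
def PsiRel {X : Type*} [NormedAddCommGroup X] [Lattice X] [IsOrderedAddMonoid X] [HasSolidNorm X] (z : ℕ → X) (s t : List X) : Prop :=
  s ∈ PsiTree z ∧ t ∈ PsiTree z ∧ t <+: s ∧ t ≠ s


/-- The Borel approximation to the rank condition: `z ∈ PD D β s` iff `s` is a string from `D`
lying in `Ψ((z n))` and every one-step extension of `s` inside `D` and `Ψ((z n))` satisfies
`PD D γ` for some `γ < β`.  Semantically this says the subtree of `Ψ((z n))` of strings from `D`
is well-founded above `s` with rank at most `β`. -/
noncomputable def PD {X : Type} [NormedAddCommGroup X] [Lattice X] [IsOrderedAddMonoid X] [HasSolidNorm X] (D : Set X) (β : Ordinal)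
    (s : List X) : Set (ℕ → X) :=
  {z | (s ∈ PsiTree z ∧ ∀ x ∈ s, x ∈ D) ∧
    ∀ d ∈ D, (s ++ [d] ∈ PsiTree z ∧ ∀ x ∈ s ++ [d], x ∈ D) →
      ∃ γ, ∃ _ : γ < β, z ∈ PD D γ (s ++ [d])}
termination_by β

theorem PD_mem {X : Type} [NormedAddCommGroup X] [Lattice X] [IsOrderedAddMonoid X] [HasSolidNorm X] (D : Set X) (β : Ordinal) (s : List X)
    (z : ℕ → X) : z ∈ PD D β s ↔ ((s ∈ PsiTree z ∧ ∀ x ∈ s, x ∈ D) ∧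
    ∀ d ∈ D, (s ++ [d] ∈ PsiTree z ∧ ∀ x ∈ s ++ [d], x ∈ D) →
      ∃ γ, ∃ _ : γ < β, z ∈ PD D γ (s ++ [d])) := by
  rw [PD]; rfl

section Aux

variable {X : Type} [NormedAddCommGroup X] [Lattice X] [IsOrderedAddMonoid X] [HasSolidNorm X]

theorem PD_mono (D : Set X) {β β' : Ordinal} (h : β ≤ β') (s : List X) :
    PD D β s ⊆ PD D β' s := by
  intro z hz
  rw [PD_mem] at hz ⊢
  exact ⟨hz.1, fun d hd hm => by
    obtain ⟨γ, hγ, hγm⟩ := hz.2 d hd hm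
    exact ⟨γ, hγ.trans_le h, hγm⟩⟩

theorem mem_PD_of_rank (D : Set X) (z : ℕ → X) (wf : WellFounded (PsiRel z)) :
    ∀ s, s ∈ PsiTree z → (∀ x ∈ s, x ∈ D) → z ∈ PD D ((wf.apply s).rank) s := by
  intro s
  induction s using wf.induction with
  | _ s IH =>
    intro hs hD
    rw [PD_mem]
    refine ⟨⟨hs, hD⟩, ?_⟩
    rintro d hd ⟨ht, htD⟩
    have hne : s ≠ s ++ [d] := fun h => by simpa using congrArg List.length h
    have hrel : PsiRel z (s ++ [d]) s := ⟨ht, hs, List.prefix_append _ _, hne⟩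
    refine ⟨(wf.apply (s ++ [d])).rank, ?_, IH _ hrel ht (fun x hx => by
      rcases List.mem_append.1 hx with h | h
      · exact hD x h
      · simpa using (by simpa using h : x = d) ▸ hd)⟩
    have h2 := Acc.rank_lt_of_rel (wf.apply s) hrel
    rwa [Subsingleton.elim ((wf.apply s).inv hrel) (wf.apply (s ++ [d]))] at h2

theorem not_mem_PD_of_branch (D : Set X) (z : ℕ → X) (d : ℕ → X)
    (hD : ∀ i, d i ∈ D)
    (hT : ∀ k, (List.ofFn fun j : Fin k => d j) ∈ PsiTree z) :
    ∀ β k, z ∉ PD D β (List.ofFn fun j : Fin k => d j) := by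
  intro β
  induction β using Ordinal.induction with
  | _ β IH =>
    intro k hz
    rw [PD_mem] at hz
    have hsucc : (List.ofFn fun j : Fin (k + 1) => d j) =
        (List.ofFn fun j : Fin k => d j) ++ [d k] := by
      rw [List.ofFn_succ']
      simp [List.concat_eq_append]
    obtain ⟨γ, hγ, hm⟩ := hz.2 (d k) (hD k) (by
      rw [← hsucc]
      refine ⟨hT (k + 1), ?_⟩
      intro x hx
      obtain ⟨i, hi⟩ := List.mem_ofFn.1 hx
      exact hi ▸ hD i)
    rw [← hsucc] at hm
    exact IH γ hγ (k + 1) hm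

theorem exists_branch (D : Set X)
    (happ : ∀ y : X, 0 < y → ∀ ε : ℝ, 0 < ε → ∃ d ∈ D, 0 < d ∧ ‖d - y‖ < ε)
    (z : ℕ → X) (y : X) (hy : 0 < y) (hyz : ∀ n, y ≤ z n) :
    ∃ d : ℕ → X, (∀ i, d i ∈ D) ∧ ∀ k, (List.ofFn fun j : Fin k => d j) ∈ PsiTree z := by
  have hr : (0 : ℝ) < ‖y‖ := by
    simpa [norm_pos_iff] using (ne_of_gt hy)
  set r := ‖y‖ with hrdef
  have hεpos : ∀ i : ℕ, (0 : ℝ) < r / (6 * 3 ^ (i + 1)) := by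
    intro i; positivity
  choose d hdD hdpos hdy using fun i : ℕ => happ y hy _ (hεpos i)
  have hcpos : ∀ i : ℕ, (0 : ℝ) < (3 : ℝ) ^ (i + 1) := fun i => by positivity
  have hc1 : ∀ i : ℕ, (1 : ℝ) ≤ (3 : ℝ) ^ (i + 1) := fun i => one_le_pow₀ (by norm_num)
  have hεle : ∀ i : ℕ, r / (6 * 3 ^ (i + 1)) ≤ r / 6 := by
    intro i
    apply div_le_div_of_nonneg_left hr.le (by norm_num)
    nlinarith [hc1 i]
  have hdlow : ∀ i, (5 / 6 : ℝ) * r ≤ ‖d i‖ := by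
    intro i
    have h1 : ‖y‖ - ‖d i - y‖ ≤ ‖d i‖ := by
      have := norm_sub_norm_le (d i) y
      linarith [abs_le.1 (abs_norm_sub_norm_le (d i) y)]
    have h2 : ‖d i - y‖ ≤ r / 6 := le_trans (hdy i).le (hεle i)
    linarith
  refine ⟨d, hdD, ?_⟩
  intro k
  have hget : ∀ (i : ℕ) (h : i < (List.ofFn fun j : Fin k => d j).length),
      (List.ofFn fun j : Fin k => d j).get ⟨i, h⟩ = d i := by
    intro i h
    simp
  refine ⟨?_, ?_, ?_⟩
  · intro i h; rw [hget]; exact hdpos i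
  · intro i h n
    rw [hget]
    have hlip : ‖(d i - z n)⁺ - (y - z n)⁺‖ ≤ ‖(d i - z n) - (y - z n)‖ := by
      have := (lipschitzWith_posPart (α := X)).dist_le_mul (d i - z n) (y - z n)
      simpa [dist_eq_norm] using this
    have hzero : (y - z n)⁺ = 0 := posPart_eq_zero.2 (sub_nonpos.2 (hyz n))
    have key : ‖(d i - z n)⁺‖ ≤ ‖d i - y‖ := by
      rw [hzero, sub_zero] at hlip
      calc ‖(d i - z n)⁺‖ ≤ ‖(d i - z n) - (y - z n)‖ := hlip
        _ = ‖d i - y‖ := by rw [show d i - z n - (y - z n) = d i - y from by abel]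
    have h2 : ‖d i - y‖ ≤ r / (6 * 3 ^ (i + 1)) := (hdy i).le
    have h3 : r / (6 * 3 ^ (i + 1)) ≤ ‖d i‖ / 3 ^ (i + 1) := by
      rw [div_le_div_iff₀ (by positivity) (hcpos i)]
      have := hdlow i
      nlinarith [hcpos i, hr]
    linarith
  · intro i h
    rw [hget, hget]
    have h1 : ‖d (i + 1) - d i‖ ≤ ‖d (i + 1) - y‖ + ‖y - d i‖ := by
      rw [show d (i + 1) - d i = (d (i + 1) - y) + (y - d i) from by abel]
      exact norm_add_le _ _
    have h2 : ‖d (i + 1) - y‖ ≤ r / (6 * 3 ^ (i + 1)) := by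
      refine le_trans (hdy (i + 1)).le ?_
      apply div_le_div_of_nonneg_left hr.le (by positivity)
      have : (3 : ℝ) ^ (i + 1) ≤ 3 ^ (i + 1 + 1) := by
        apply pow_le_pow_right₀ (by norm_num) (by omega)
      linarith
    have h3 : ‖y - d i‖ ≤ r / (6 * 3 ^ (i + 1)) := by
      rw [norm_sub_rev]; exact (hdy i).le
    have h4 : r / (3 * 3 ^ (i + 1)) ≤ ‖d i‖ / 3 ^ (i + 1) := by
      rw [div_le_div_iff₀ (by positivity) (hcpos i)]
      nlinarith [hcpos i, hr, hdlow i]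
    have h5 : r / (6 * 3 ^ (i + 1)) + r / (6 * 3 ^ (i + 1)) = r / (3 * 3 ^ (i + 1)) := by
      field_simp; ring
    linarith

theorem isClosed_psiTree (s : List X) : IsClosed {z : ℕ → X | s ∈ PsiTree z} := by
  have heq : {z : ℕ → X | s ∈ PsiTree z} =
      {_z : ℕ → X | (∀ (i : ℕ) (h : i < s.length), 0 < s.get ⟨i, h⟩) ∧
        (∀ (i : ℕ) (h : i + 1 < s.length),
          ‖s.get ⟨i + 1, h⟩ - s.get ⟨i, Nat.lt_of_succ_lt h⟩‖ ≤
            ‖s.get ⟨i, Nat.lt_of_succ_lt h⟩‖ / 3 ^ (i + 1))} ∩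
      ⋂ (i : Fin s.length) (n : ℕ),
        {z : ℕ → X | ‖(s.get i - z n)⁺‖ ≤ ‖s.get i‖ / 3 ^ ((i : ℕ) + 1)} := by
    ext z
    simp only [Set.mem_setOf_eq, Set.mem_inter_iff, Set.mem_iInter, PsiTree]
    constructor
    · rintro ⟨h1, h2, h3⟩
      exact ⟨⟨h1, h3⟩, fun i n => h2 i i.2 n⟩
    · rintro ⟨⟨h1, h3⟩, h2⟩
      exact ⟨h1, fun i hi n => h2 ⟨i, hi⟩ n, h3⟩
  rw [heq]
  refine IsClosed.inter ?_ (isClosed_iInter fun i => isClosed_iInter fun n => ?_)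
  · by_cases hp : (∀ (i : ℕ) (h : i < s.length), 0 < s.get ⟨i, h⟩) ∧
        (∀ (i : ℕ) (h : i + 1 < s.length),
          ‖s.get ⟨i + 1, h⟩ - s.get ⟨i, Nat.lt_of_succ_lt h⟩‖ ≤
            ‖s.get ⟨i, Nat.lt_of_succ_lt h⟩‖ / 3 ^ (i + 1))
    · rw [Set.eq_univ_of_forall fun _ => hp]; exact isClosed_univ
    · rw [Set.eq_empty_iff_forall_notMem.2 fun _ h => hp h]; exact isClosed_empty
  · exact isClosed_le
      ((continuous_posPart.comp (continuous_const.sub (continuous_apply n))).norm)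
      continuous_const

theorem measurable_PD (D : Set X) (hDc : D.Countable) :
    ∀ β : Ordinal.{0}, β.card ≤ Cardinal.aleph0 → ∀ s : List X,
      MeasurableSet[borel (ℕ → X)] (PD D β s) := by
  intro β
  induction β using Ordinal.induction with
  | _ β IH =>
    intro hβ s
    letI : MeasurableSpace (ℕ → X) := borel _
    haveI : BorelSpace (ℕ → X) := ⟨rfl⟩
    have heq : PD D β s =
        ({z : ℕ → X | s ∈ PsiTree z} ∩ {_z : ℕ → X | ∀ x ∈ s, x ∈ D}) ∩
        ⋂ d ∈ D, (({z : ℕ → X | s ++ [d] ∈ PsiTree z} ∩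
            {_z : ℕ → X | ∀ x ∈ s ++ [d], x ∈ D})ᶜ ∪
          ⋃ γ ∈ Set.Iio β, PD D γ (s ++ [d])) := by
      ext z
      rw [Set.mem_inter_iff, PD_mem]
      simp only [Set.mem_inter_iff, Set.mem_iInter, Set.mem_union, Set.mem_compl_iff,
        Set.mem_setOf_eq, Set.mem_iUnion, Set.mem_Iio]
      constructor
      · rintro ⟨h1, h2⟩
        refine ⟨h1, fun d hd => ?_⟩
        by_cases hm : s ++ [d] ∈ PsiTree z ∧ ∀ x ∈ s ++ [d], x ∈ D
        · obtain ⟨γ, hγ, hγm⟩ := h2 d hd hm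
          exact Or.inr ⟨γ, hγ, hγm⟩
        · exact Or.inl hm
      · rintro ⟨h1, h2⟩
        refine ⟨h1, fun d hd hm => ?_⟩
        rcases h2 d hd with h | ⟨γ, hγ, hγm⟩
        · exact absurd hm h
        · exact ⟨γ, hγ, hγm⟩
    have hIio : (Set.Iio β).Countable := by
      rw [← Set.countable_coe_iff, ← Cardinal.mk_le_aleph0_iff, Ordinal.mk_Iio_ordinal]
      simpa using Cardinal.lift_le.{1}.2 hβ
    rw [heq]
    refine MeasurableSet.inter (MeasurableSet.inter (isClosed_psiTree s).measurableSet
      (MeasurableSet.const _)) ?_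
    refine MeasurableSet.biInter hDc fun d hd => ?_
    refine MeasurableSet.union (((isClosed_psiTree (s ++ [d])).measurableSet.inter
      (MeasurableSet.const _)).compl) ?_
    exact MeasurableSet.biUnion hIio fun γ hγ =>
      IH γ hγ ((Ordinal.card_le_card hγ.le).trans hβ) _

theorem exists_goodD [TopologicalSpace.SeparableSpace X] :
    ∃ D : Set X, D.Countable ∧
      ∀ y : X, 0 < y → ∀ ε : ℝ, 0 < ε → ∃ d ∈ D, 0 < d ∧ ‖d - y‖ < ε := by
  obtain ⟨S, hSc, hSd⟩ := TopologicalSpace.exists_countable_dense X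
  refine ⟨posPart '' S, hSc.image _, ?_⟩
  intro y hy ε hε
  have hny : (0 : ℝ) < ‖y‖ := by simpa [norm_pos_iff] using (ne_of_gt hy)
  obtain ⟨s, hsS, hs⟩ := hSd.exists_dist_lt y (lt_min hε hny)
  refine ⟨s⁺, Set.mem_image_of_mem _ hsS, ?_, ?_⟩
  · have hle : ‖s⁺ - y‖ ≤ ‖s - y‖ := by
      have := (lipschitzWith_posPart (α := X)).dist_le_mul s y
      rw [dist_eq_norm, dist_eq_norm, NNReal.coe_one, one_mul] at this
      rwa [show y⁺ = y from posPart_eq_self.2 hy.le] at this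
    have hlt : ‖s⁺ - y‖ < ‖y‖ := by
      have : ‖s - y‖ < ‖y‖ := by
        rw [norm_sub_rev, ← dist_eq_norm]
        exact hs.trans_le (min_le_right _ _)
      linarith
    have hpos : 0 < ‖s⁺‖ := by
      have := norm_sub_norm_le y (s⁺)
      have h2 : ‖y - s⁺‖ = ‖s⁺ - y‖ := norm_sub_rev _ _
      linarith
    refine lt_of_le_of_ne (posPart_nonneg s) ?_
    intro h0
    rw [← h0] at hpos
    simp at hpos
  · have hle : ‖s⁺ - y‖ ≤ ‖s - y‖ := by
      have := (lipschitzWith_posPart (α := X)).dist_le_mul s y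
      rw [dist_eq_norm, dist_eq_norm, NNReal.coe_one, one_mul] at this
      rwa [show y⁺ = y from posPart_eq_self.2 hy.le] at this
    have : ‖s - y‖ < ε := by
      rw [norm_sub_rev, ← dist_eq_norm]
      exact hs.trans_le (min_le_left _ _)
    linarith

theorem isClosed_antitone' : IsClosed {z : ℕ → X | Antitone z} := by
  have heq : {z : ℕ → X | Antitone z} =
      ⋂ (a : ℕ) (b : ℕ) (_ : a ≤ b), {z : ℕ → X | z b ≤ z a} := by
    ext z
    simp only [Set.mem_setOf_eq, Set.mem_iInter]
    exact ⟨fun h a b hab => h hab, fun h a b hab => h a b hab⟩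
  rw [heq]
  exact isClosed_iInter fun a => isClosed_iInter fun b => isClosed_iInter fun _ =>
    isClosed_le (continuous_apply b) (continuous_apply a)

theorem isClosed_nonneg' : IsClosed {z : ℕ → X | ∀ n, 0 ≤ z n} := by
  have heq : {z : ℕ → X | ∀ n, 0 ≤ z n} = ⋂ (n : ℕ), {z : ℕ → X | 0 ≤ z n} := by
    ext z; simp [Set.mem_iInter]
  rw [heq]
  exact isClosed_iInter fun n => isClosed_le continuous_const (continuous_apply n)

end Aux

theorem stmt14 {X : Type} [NormedAddCommGroup X] [Lattice X] [IsOrderedAddMonoid X] [HasSolidNorm X] [NormedSpace ℝ X] [CompleteSpace X]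
    [PosSMulStrictMono ℝ X] [PosSMulReflectLT ℝ X] [TopologicalSpace.SeparableSpace X]
    (hα : ∃ α : Ordinal, α.card ≤ Cardinal.aleph0 ∧
      ∀ z ∈ XDownZero X, ∃ h : WellFounded (PsiRel z),
        (h.apply ([] : List X)).rank + 1 ≤ α) :
    MeasurableSet[borel (ℕ → X)] (XDownZero X) := by
  obtain ⟨α, hαc, hαr⟩ := hα
  obtain ⟨D, hDc, happ⟩ := exists_goodD (X := X)
  letI : MeasurableSpace (ℕ → X) := borel _
  haveI : BorelSpace (ℕ → X) := ⟨rfl⟩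
  have hnil : ∀ z : ℕ → X, ([] : List X) ∈ PsiTree z := by
    intro z
    refine ⟨?_, ?_, ?_⟩ <;> intro i h <;> simp at h
  have heq : XDownZero X =
      ({z : ℕ → X | Antitone z} ∩ {z : ℕ → X | ∀ n, 0 ≤ z n}) ∩ PD D α [] := by
    ext z
    constructor
    · rintro ⟨hA, hpos, hGLB⟩
      refine ⟨⟨hA, hpos⟩, ?_⟩
      obtain ⟨wf, hrank⟩ := hαr z ⟨hA, hpos, hGLB⟩
      have hle : (wf.apply ([] : List X)).rank ≤ α := by
        have h1 : (wf.apply ([] : List X)).rank < (wf.apply ([] : List X)).rank + 1 := by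
          rw [Ordinal.add_one_eq_succ]; exact Order.lt_succ _
        exact (h1.trans_le hrank).le
      exact PD_mono D hle [] (mem_PD_of_rank D z wf [] (hnil z) (by simp))
    · rintro ⟨⟨hA, hpos⟩, hPD⟩
      refine ⟨hA, hpos, ?_, ?_⟩
      · rintro x ⟨n, rfl⟩
        exact hpos n
      · intro b hb
        by_contra hb0
        have hy : 0 < b⁺ := by
          refine lt_of_le_of_ne (posPart_nonneg b) fun h0 => hb0 ?_
          exact posPart_eq_zero.1 h0.symm
        have hyz : ∀ n, b⁺ ≤ z n := by
          intro n
          rw [posPart_def]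
          exact sup_le (hb ⟨n, rfl⟩) (hpos n)
        obtain ⟨d, hdD, hdT⟩ := exists_branch D happ z b⁺ hy hyz
        have := not_mem_PD_of_branch D z d hdD hdT α 0
        simp only [List.ofFn_zero] at this
        exact this hPD
  rw [heq]
  exact MeasurableSet.inter
    ((isClosed_antitone'.inter isClosed_nonneg').measurableSet)
    (measurable_PD D hDc α hαc [])
end
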